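/- Let ε and δ be real numbers with 0 < ε < 1 and 0 < δ ≤ 1, let m, p be natural numbers with m ≥ 1 and p ≥ 1, let n and j be natural numbers, and set H = (m * p^(j+1))^n (the size of the MIL hypothesis space with p predicate symbols, m metarules in M_{i,j}, and at most n clauses). If s is a real number satisfying s ≥ (1/ε) * (n * Real.log m + (j+1) * n * Real.log p + Real.log (1/δ)), then H * (1 - ε)^s ≤ δ (where the exponentiation (1-ε)^s is real power). Consequently, the probability that some fixed hypothesis of true error greater than ε is consistent with s independent examples is at most δ after a union bound over the H hypotheses. -/

import Mathlib

theorem mil_sample_complexity (ε δ : ℝ) (hε : 0 < ε) (hε1 : ε < 1)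
    (hδ : 0 < δ) (hδ1 : δ ≤ 1) (m p : ℕ) (hm : 1 ≤ m) (hp : 1 ≤ p)
    (n j : ℕ) (H : ℕ) (hH : H = (m * p ^ (j + 1)) ^ n) (s : ℝ)
    (hs : s ≥ (1 / ε) * ((n : ℝ) * Real.log (m : ℝ)
        + ((j : ℝ) + 1) * (n : ℝ) * Real.log (p : ℝ) + Real.log (1 / δ))) :
    (H : ℝ) * (1 - ε) ^ s ≤ δ := by
  have hm' : (1 : ℝ) ≤ (m : ℝ) := by exact_mod_cast hm
  have hp' : (1 : ℝ) ≤ (p : ℝ) := by exact_mod_cast hp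
  have hHpos : (0 : ℝ) < (H : ℝ) := by
    have : 1 ≤ H := by
      subst hH
      exact Nat.one_le_pow _ _ (Nat.mul_pos hm (Nat.pow_pos hp))
    exact_mod_cast Nat.lt_of_lt_of_le Nat.zero_lt_one this
  have hlogH : Real.log (H : ℝ) =
      (n : ℝ) * Real.log (m : ℝ) + ((j : ℝ) + 1) * (n : ℝ) * Real.log (p : ℝ) := by
    subst hH
    push_cast
    rw [Real.log_pow, Real.log_mul (by positivity) (by positivity), Real.log_pow]
    push_cast
    ring
  -- lower bound on ε * s
  have hsε : ε * s ≥ Real.log (H : ℝ) + Real.log (1 / δ) := by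
    have := mul_le_mul_of_nonneg_left hs (le_of_lt hε)
    rw [← mul_assoc, mul_one_div, div_self (ne_of_gt hε), one_mul] at this
    rw [hlogH]
    linarith
  have h1ε : (0 : ℝ) < 1 - ε := by linarith
  have hlog1ε : Real.log (1 - ε) ≤ -ε := by
    have := Real.log_le_sub_one_of_pos h1ε
    linarith
  have hs0 : 0 ≤ s := by
    have h1 : 0 ≤ (n : ℝ) * Real.log (m : ℝ) := by
      apply mul_nonneg (Nat.cast_nonneg n) (Real.log_nonneg hm')
    have h2 : 0 ≤ ((j : ℝ) + 1) * (n : ℝ) * Real.log (p : ℝ) := by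
      apply mul_nonneg (by positivity) (Real.log_nonneg hp')
    have h3 : 0 ≤ Real.log (1 / δ) := by
      apply Real.log_nonneg
      rw [le_div_iff₀ hδ]; linarith
    have : 0 ≤ (1 / ε) * ((n : ℝ) * Real.log (m : ℝ)
        + ((j : ℝ) + 1) * (n : ℝ) * Real.log (p : ℝ) + Real.log (1 / δ)) := by
      positivity
    linarith
  have key : Real.log (H : ℝ) + s * Real.log (1 - ε) ≤ Real.log δ := by
    have h1 : s * Real.log (1 - ε) ≤ s * (-ε) :=
      mul_le_mul_of_nonneg_left hlog1ε hs0
    rw [Real.log_div one_ne_zero (ne_of_gt hδ), Real.log_one] at hsε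
    nlinarith
  have hrpow : (1 - ε) ^ s = Real.exp (s * Real.log (1 - ε)) := by
    rw [Real.rpow_def_of_pos h1ε, mul_comm]
  calc (H : ℝ) * (1 - ε) ^ s
      = Real.exp (Real.log (H : ℝ) + s * Real.log (1 - ε)) := by
        rw [Real.exp_add, Real.exp_log hHpos, hrpow]
    _ ≤ Real.exp (Real.log δ) := Real.exp_le_exp.mpr key
    _ = δ := Real.exp_log hδ
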